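/- arXiv:2403.09009 — 3 statements merged into one kernel-verified Lean document; each statement's English description precedes it below -/
import Mathlib

section
/- Let Q = {B₁, ..., B_{d+1}} be a family of d+1 nonempty compact convex sets in ℝ^d. A point p lies in the intersection of the convex hulls of all transversals of Q (i.e., all sets {p₁,...,p_{d+1}} with pᵢ ∈ Bᵢ) if and only if for every closed halfspace H whose boundary hyperplane passes through p, at least one Bᵢ is contained in H. -/
open Set

/-- The invariant hull of a family of sets: the intersection of the convex hulls of
all transversals (choices of one point from each set). -/
def IHull {ι E : Type*} [AddCommGroup E] [Module ℝ E] (B : ι → Set E) : Set E :=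
  ⋂ f ∈ {f : ι → E | ∀ i, f i ∈ B i}, convexHull ℝ (Set.range f)

theorem stmt_0 {d : ℕ} (Q : Fin (d + 1) → Set (EuclideanSpace ℝ (Fin d)))
    (hne : ∀ i, (Q i).Nonempty) (hcpt : ∀ i, IsCompact (Q i))
    (hconv : ∀ i, Convex ℝ (Q i)) (p : EuclideanSpace ℝ (Fin d)) :
    p ∈ IHull Q ↔
      ∀ l : EuclideanSpace ℝ (Fin d) →L[ℝ] ℝ, l ≠ 0 → ∃ i, Q i ⊆ {x | l x ≤ l p} := by
  constructor
  · intro hp l _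
    by_contra h
    push_neg at h
    have hex : ∀ i, ∃ x, x ∈ Q i ∧ l p < l x := by
      intro i
      obtain ⟨x, hx, hx'⟩ := Set.not_subset.mp (h i)
      exact ⟨x, hx, lt_of_not_ge hx'⟩
    choose f hfQ hfl using hex
    have hmem : p ∈ convexHull ℝ (Set.range f) := by
      simp only [IHull, Set.mem_iInter] at hp
      exact hp f hfQ
    have hsub : convexHull ℝ (Set.range f) ⊆ {x | l p < l x} := by
      apply convexHull_min
      · rintro x ⟨i, rfl⟩; exact hfl i
      · have : Convex ℝ {x : EuclideanSpace ℝ (Fin d) | l p < l x} :=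
          convex_halfSpace_gt (𝕜 := ℝ) (β := ℝ) (f := fun x => l x) l.toLinearMap.isLinear (l p)
        exact this
    exact lt_irrefl (l p) (hsub hmem)
  · intro h
    simp only [IHull, Set.mem_iInter]
    intro f hf
    by_contra hp
    have hclosed : IsClosed (convexHull ℝ (Set.range f)) :=
      ((Set.finite_range f).isCompact_convexHull (𝕜 := ℝ)).isClosed
    obtain ⟨l, u, hlp, hlb⟩ :=
      geometric_hahn_banach_point_closed (convex_convexHull ℝ _) hclosed hp
    have hmem0 : f 0 ∈ convexHull ℝ (Set.range f) :=
      subset_convexHull ℝ _ ⟨0, rfl⟩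
    have hl : l ≠ 0 := by
      intro h0
      subst h0
      simp only [ContinuousLinearMap.zero_apply] at hlp hlb
      exact absurd (hlb _ hmem0) (not_lt.mpr hlp.le)
    obtain ⟨i, hi⟩ := h l hl
    have h1 : l (f i) ≤ l p := hi (hf i)
    have h2 : u < l (f i) := hlb _ (subset_convexHull ℝ _ ⟨i, rfl⟩)
    linarith
end

section
/- Let K = {K₁, ..., Kₙ} be a family of n ≥ d+1 nonempty sets in ℝ^d. Then the union, over all (d+1)-member subfamilies S of K, of the convex hull of the union of the sets in S, equals the convex hull of the union of all sets in K. -/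
open Set

theorem stmt_4 {d n : ℕ} (hn : d + 1 ≤ n)
    (K : Fin n → Set (EuclideanSpace ℝ (Fin d))) (hne : ∀ i, (K i).Nonempty) :
    convexHull ℝ (⋃ i, K i) =
      ⋃ S ∈ {S : Finset (Fin n) | S.card = d + 1}, convexHull ℝ (⋃ i ∈ S, K i) := by
  apply Set.Subset.antisymm
  · intro x hx
    rw [convexHull_eq_union] at hx
    simp only [Set.mem_iUnion] at hx
    obtain ⟨t, hts, hai, hxt⟩ := hx
    -- t has card ≤ d + 1
    have hcard : t.card ≤ d + 1 := by
      have h1 := hai.card_le_finrank_succ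
      have h2 : Module.finrank ℝ ↥(vectorSpan ℝ (Set.range ((↑) : t → EuclideanSpace ℝ (Fin d)))) ≤ d := by
        simpa using Submodule.finrank_le (vectorSpan ℝ (Set.range ((↑) : t → EuclideanSpace ℝ (Fin d))))
      calc t.card = t.attach.card := by simp
        _ ≤ _ := h1
        _ ≤ d + 1 := by omega
    -- choose an index for each point of t
    have hchoice : ∀ p ∈ t, ∃ i, p ∈ K i := by
      intro p hp
      have := hts hp
      simpa using this
    choose f hf using hchoice
    let T : Finset (Fin n) := t.attach.image (fun p => f p.1 p.2)
    have hTcard : T.card ≤ d + 1 :=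
      le_trans (Finset.card_image_le.trans (by simp)) hcard
    obtain ⟨S, hTS, hScard⟩ := Finset.exists_superset_card_eq hTcard (by simpa using hn)
    simp only [Set.mem_iUnion, Set.mem_setOf_eq]
    refine ⟨S, hScard, ?_⟩
    refine convexHull_mono ?_ hxt
    intro p hp
    have hpt : p ∈ t := hp
    refine Set.mem_iUnion.2 ⟨f p hpt, ?_⟩
    refine Set.mem_iUnion.2 ⟨hTS ?_, hf p hpt⟩
    exact Finset.mem_image.2 ⟨⟨p, hpt⟩, Finset.mem_attach _ _, rfl⟩
  · refine Set.iUnion₂_subset fun S _ => convexHull_mono ?_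
    exact Set.iUnion₂_subset fun i _ => Set.subset_iUnion _ i
end

section
/- Every finite set S of N points in ℝ^d admits a centerpoint: there exists p ∈ ℝ^d such that every closed halfspace containing p contains at least ⌈N/(d+1)⌉ points of S. -/
open Set

theorem stmt_18 {d : ℕ} (S : Finset (EuclideanSpace ℝ (Fin d))) :
    ∃ p : EuclideanSpace ℝ (Fin d),
      ∀ l : EuclideanSpace ℝ (Fin d) →L[ℝ] ℝ, l ≠ 0 → ∀ c : ℝ, l p ≤ c →
        ((⌈(S.card : ℝ) / (d + 1)⌉ : ℤ) : ℝ) ≤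
          ({x ∈ (S : Set (EuclideanSpace ℝ (Fin d))) | l x ≤ c}).ncard := by
  classical
  set N := S.card with hN
  set k : ℕ := (⌈(N : ℝ) / (d + 1)⌉).toNat with hk
  have hceil : ((⌈(N : ℝ) / (d + 1)⌉ : ℤ) : ℝ) ≤ (k : ℝ) := by
    rw [hk]
    exact_mod_cast Int.self_le_toNat _
  rcases Nat.eq_zero_or_pos k with hk0 | hk1
  · refine ⟨0, fun l hl c hc => ?_⟩
    have : ((⌈(N : ℝ) / (d + 1)⌉ : ℤ) : ℝ) ≤ 0 := by
      rw [hk0] at hceil; exact_mod_cast hceil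
    exact this.trans (Nat.cast_nonneg _)
  -- k ≥ 1 case
  have hkle : ((d : ℝ) + 1) * ((k : ℝ) - 1) < (N : ℝ) := by
    have hnn : (0 : ℝ) ≤ (N : ℝ) / (d + 1) := by positivity
    have hkc : (k : ℝ) = ((⌈(N : ℝ) / (d + 1)⌉ : ℤ) : ℝ) := by
      rw [hk]; exact_mod_cast Int.toNat_of_nonneg (Int.ceil_nonneg hnn)
    have h1 : ((⌈(N : ℝ) / (d + 1)⌉ : ℤ) : ℝ) < (N : ℝ) / (d + 1) + 1 :=
      Int.ceil_lt_add_one _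
    have hd : (0 : ℝ) < (d : ℝ) + 1 := by positivity
    rw [hkc, mul_comm]
    exact (lt_div_iff₀ hd).mp (by linarith : ((⌈(N : ℝ) / (d + 1)⌉ : ℤ) : ℝ) - 1 < (N : ℝ) / (d + 1))
  have hkleN : (d + 1) * (k - 1) < N := by
    by_contra h
    push_neg at h
    have : (N : ℝ) ≤ ((d : ℝ) + 1) * ((k : ℝ) - 1) := by
      have h' := (Nat.cast_le (α := ℝ)).mpr h
      push_cast [Nat.cast_sub hk1] at h'
      linarith
    linarith
  set s : Finset (Finset (EuclideanSpace ℝ (Fin d))) := S.powerset.filter (fun T => (S \ T).card < k) with hs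
  have hmem : ∀ T ∈ s, T ⊆ S ∧ (S \ T).card < k := by
    intro T hT
    rw [hs, Finset.mem_filter, Finset.mem_powerset] at hT
    exact hT
  -- Helly
  have hhelly : (⋂ T ∈ s, convexHull ℝ (T : Set (EuclideanSpace ℝ (Fin d)))).Nonempty := by
    apply Convex.helly_theorem' (𝕜 := ℝ)
    · intro T _; exact convex_convexHull ℝ _
    · intro I hI hIcard
      rw [finrank_euclideanSpace_fin] at hIcard
      -- find a common point of S in all T ∈ I
      set B : Finset (EuclideanSpace ℝ (Fin d)) := I.biUnion (fun T => S \ T) with hB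
      have hBcard : B.card < N := by
        calc B.card ≤ ∑ T ∈ I, (S \ T).card := Finset.card_biUnion_le
          _ ≤ ∑ T ∈ I, (k - 1) := by
              apply Finset.sum_le_sum
              intro T hT
              have := (hmem T (hI hT)).2
              omega
          _ = I.card * (k - 1) := by rw [Finset.sum_const, smul_eq_mul]
          _ ≤ (d + 1) * (k - 1) := by
              apply Nat.mul_le_mul_right
              exact hIcard
          _ < N := hkleN
      have hSB : (S \ B).Nonempty := by
        rw [← Finset.card_pos]
        have : B.card < S.card := hBcard
        have hle : (S ∩ B).card ≤ B.card := Finset.card_le_card (Finset.inter_subset_right)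
        have := Finset.card_sdiff_add_card_inter S B
        omega
      obtain ⟨x, hx⟩ := hSB
      rw [Finset.mem_sdiff] at hx
      refine ⟨x, ?_⟩
      rw [Set.mem_iInter₂]
      intro T hT
      apply subset_convexHull
      have hxT : x ∈ T := by
        by_contra hxT
        exact hx.2 (Finset.mem_biUnion.mpr ⟨T, hT, Finset.mem_sdiff.mpr ⟨hx.1, hxT⟩⟩)
      exact_mod_cast hxT
  obtain ⟨p, hp⟩ := hhelly
  rw [Set.mem_iInter₂] at hp
  refine ⟨p, fun l hl c hc => ?_⟩
  set A : Finset (EuclideanSpace ℝ (Fin d)) := S.filter (fun x => l x ≤ c) with hA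
  have hgoalset : {x ∈ (S : Set (EuclideanSpace ℝ (Fin d))) | l x ≤ c} = (A : Set (EuclideanSpace ℝ (Fin d))) := by
    ext x
    simp [hA, Finset.mem_filter, Set.mem_setOf_eq]
  rw [hgoalset, Set.ncard_coe_finset]
  have hkA : k ≤ A.card := by
    by_contra hcon
    push_neg at hcon
    set T : Finset (EuclideanSpace ℝ (Fin d)) := S.filter (fun x => ¬ l x ≤ c) with hT
    have hTS : T = S \ A := by rw [hT, hA, Finset.filter_not]
    have hSdT : S \ T = A := by
      rw [hTS]
      exact Finset.sdiff_sdiff_eq_self (Finset.filter_subset _ _)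
    have hTs : T ∈ s := by
      rw [hs, Finset.mem_filter, Finset.mem_powerset]
      exact ⟨Finset.filter_subset _ _, by rw [hSdT]; exact hcon⟩
    have hpT := hp T hTs
    have hsub : convexHull ℝ (T : Set (EuclideanSpace ℝ (Fin d))) ⊆ {x | c < l x} := by
      apply convexHull_min
      · intro x hx
        simp only [hT, Finset.coe_filter, Set.mem_setOf_eq] at hx
        exact lt_of_not_ge hx.2
      · exact convex_halfSpace_gt (l.toLinearMap.isLinear) c
    have := hsub hpT
    simp only [Set.mem_setOf_eq] at this
    linarith
  calc ((⌈(N : ℝ) / (d + 1)⌉ : ℤ) : ℝ) ≤ (k : ℝ) := hceil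
    _ ≤ (A.card : ℝ) := by exact_mod_cast hkA
end
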